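/- Let M ≥ 2, let σ_m > 0 for all m ∈ {1,…,M}, let P > 0 and ε > 0, set Σσ = Σ_{i=1}^M σ_i, and define d*_m = (M−1)·P/(ε·Σσ) · (1 − σ_m·(M−1)/Σσ). Assume σ_m·(M−1) < Σσ for every m. Then the profile (d*_1,…,d*_M) is a Nash equilibrium of the computing centers' game: for every m and every d ≥ 0, P·d*_m/(d*_m + Σ_{i≠m} d*_i) − ε·σ_m·d*_m ≥ P·d/(d + Σ_{i≠m} d*_i) − ε·σ_m·d. -/

import Mathlib

/-- Key one-dimensional lemma: if `e * K^2 = P * s`, `d + s = K`, `s > 0`, `K > 0`,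
then `x = d` maximizes `P*x/(x+s) - e*x` over `x ≥ 0`. -/
lemma nash_key (P e s K dd x : ℝ) (hP : 0 < P) (hs : 0 < s) (hK : 0 < K)
    (hdK : dd + s = K) (hx : 0 ≤ x) (he : e * K ^ 2 = P * s) :
    P * x / (x + s) - e * x ≤ P * dd / (dd + s) - e * dd := by
  have hxs : 0 < x + s := by linarith
  have hK0 : (K : ℝ) ≠ 0 := ne_of_gt hK
  have heq : e = P * s / K ^ 2 := by
    field_simp
    linarith [he]
  have hid : P * dd / (dd + s) - e * dd - (P * x / (x + s) - e * x)
      = P * s * (dd - x) ^ 2 / (K ^ 2 * (x + s)) := by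
    have hdd : dd = K - s := by linarith
    subst heq hdd
    rw [show K - s + s = K by ring]
    have hxs' : x + s ≠ 0 := hxs.ne'
    field_simp
    ring
  nlinarith [div_nonneg (mul_nonneg (mul_nonneg hP.le hs.le) (sq_nonneg (dd - x)))
    (le_of_lt (by positivity : (0:ℝ) < K ^ 2 * (x + s)))]

/-- the closed-form profile `d*_m = (M−1)·P/(ε·Σσ)·(1 − σ_m·(M−1)/Σσ)`
is a Nash equilibrium of the computing centers' game. -/
theorem computing_centers_nash (M : ℕ) (hM : 2 ≤ M) (σ : Fin M → ℝ) (hσ : ∀ m, 0 < σ m)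
    (P ε : ℝ) (hP : 0 < P) (hε : 0 < ε)
    (hint : ∀ m, σ m * ((M : ℝ) - 1) < ∑ i, σ i)
    (d : Fin M → ℝ)
    (hd : ∀ m, d m = ((M : ℝ) - 1) * P / (ε * ∑ i, σ i) *
      (1 - σ m * ((M : ℝ) - 1) / ∑ i, σ i)) :
    ∀ m, ∀ x : ℝ, 0 ≤ x →
      P * x / (x + ∑ i ∈ Finset.univ.erase m, d i) - ε * σ m * x ≤
      P * d m / (d m + ∑ i ∈ Finset.univ.erase m, d i) - ε * σ m * d m := by
  intro m x hx
  set S : ℝ := ∑ i, σ i with hSdef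
  have hM1 : (1 : ℝ) ≤ (M : ℝ) - 1 := by
    have : (2 : ℝ) ≤ (M : ℝ) := by exact_mod_cast hM
    linarith
  have hS : 0 < S := by
    have h := hint m
    nlinarith [(hσ m).le, hσ m]
  set K : ℝ := ((M : ℝ) - 1) * P / (ε * S) with hKdef
  have hK : 0 < K := by
    apply div_pos (by nlinarith) (by positivity)
  -- sum over erase m
  have hcard : (Finset.univ.erase m).card = M - 1 := by
    simp [Finset.card_erase_of_mem]
  have hsum_sigma : ∑ i ∈ Finset.univ.erase m, σ i = S - σ m := by
    rw [hSdef, ← Finset.sum_erase_add _ _ (Finset.mem_univ m)]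
    ring
  have hs_eq : (∑ i ∈ Finset.univ.erase m, d i) = K * (((M : ℝ) - 1) * σ m / S) := by
    have : ∀ i, d i = K - K * (((M : ℝ) - 1) / S) * σ i := by
      intro i
      rw [hd i]
      field_simp
    rw [Finset.sum_congr rfl (fun i _ => this i), Finset.sum_sub_distrib,
      Finset.sum_const, hcard, ← Finset.mul_sum, hsum_sigma]
    have hMcast : ((M - 1 : ℕ) : ℝ) = (M : ℝ) - 1 := by
      have : 1 ≤ M := by omega
      push_cast [this]; ring
    rw [nsmul_eq_mul, hMcast]
    field_simp
    ring
  set s : ℝ := ∑ i ∈ Finset.univ.erase m, d i with hsdef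
  have hs : 0 < s := by
    rw [hs_eq]
    have : 0 < ((M : ℝ) - 1) * σ m / S := by
      apply div_pos (by nlinarith [hσ m]) hS
    positivity
  have hdK : d m + s = K := by
    rw [hs_eq, hd m]
    field_simp
    ring
  have he : (ε * σ m) * K ^ 2 = P * s := by
    rw [hs_eq, hKdef]
    field_simp
  exact nash_key P (ε * σ m) s K (d m) x hP hs hK hdK hx he
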